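/- Let (a_3,a_4) ∈ ℂ² with (a_3,a_4) ∉ {(0,0),(0,1)}. The variety G = {(z_2,z_3,w_1,w_2,w_3) ∈ ℂ^5 : z_2 w_1 + z_3 w_2 = a_3, 1 + z_2 w_2 + z_3 w_3 = a_4} is a smooth, connected 3-dimensional complex manifold: it is covered by the two charts {z_2 ≠ 0} ≅ ℂ* × ℂ × ℂ (solving for w_1, w_2 — or equivalently expressing two of the w-variables) and {z_3 ≠ 0}, which have nonempty intersection. -/

import Mathlib

section Aux

/-- Connectedness of ℂ \ {0}. -/
lemma aux_connectedSpace_ne_zero : ConnectedSpace {c : ℂ // c ≠ 0} :=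
  isConnected_iff_connectedSpace.1 (isConnected_compl_singleton_of_one_lt_rank
    (Complex.rank_real_complex ▸ by norm_num) (0 : ℂ))

/-- Chart over `{p 0 ≠ 0}`. -/
noncomputable def chart0 (a₃ a₄ : ℂ) :
    {p : Fin 5 → ℂ //
      (p 0 * p 2 + p 1 * p 3 = a₃ ∧ 1 + p 0 * p 3 + p 1 * p 4 = a₄) ∧ p 0 ≠ 0}
      ≃ₜ ({c : ℂ // c ≠ 0} × ℂ × ℂ) where
  toFun p := (⟨p.1 0, p.2.2⟩, p.1 1, p.1 4)
  invFun q :=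
    ⟨![(q.1 : ℂ), q.2.1, (a₃ - q.2.1 * ((a₄ - 1 - q.2.1 * q.2.2) / (q.1 : ℂ))) / (q.1 : ℂ),
       (a₄ - 1 - q.2.1 * q.2.2) / (q.1 : ℂ), q.2.2],
     by
       obtain ⟨⟨z, hz⟩, t, w⟩ := q
       refine ⟨⟨?_, ?_⟩, hz⟩ <;> simp <;> field_simp <;> ring⟩
  left_inv := by
    rintro ⟨p, ⟨h1, h2⟩, hz⟩
    apply Subtype.ext
    have h3 : (a₄ - 1 - p 1 * p 4) / p 0 = p 3 := by
      have h : a₄ - 1 - p 1 * p 4 = p 0 * p 3 := by linear_combination -h2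
      rw [h]; exact mul_div_cancel_left₀ _ hz
    have h4 : (a₃ - p 1 * p 3) / p 0 = p 2 := by
      have h : a₃ - p 1 * p 3 = p 0 * p 2 := by linear_combination -h1
      rw [h]; exact mul_div_cancel_left₀ _ hz
    funext i
    fin_cases i <;> simp [h3, h4]
  right_inv := by
    rintro ⟨⟨z, hz⟩, t, w⟩
    simp
  continuous_toFun := by
    have h : ∀ i : Fin 5, Continuous fun p : {p : Fin 5 → ℂ //
        (p 0 * p 2 + p 1 * p 3 = a₃ ∧ 1 + p 0 * p 3 + p 1 * p 4 = a₄) ∧ p 0 ≠ 0} =>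
        (p : Fin 5 → ℂ) i := fun i => (continuous_apply i).comp continuous_subtype_val
    exact ((h 0).subtype_mk _).prodMk ((h 1).prodMk (h 4))
  continuous_invFun := by
    apply Continuous.subtype_mk
    have hz : Continuous fun q : {c : ℂ // c ≠ 0} × ℂ × ℂ => (q.1 : ℂ) :=
      continuous_subtype_val.comp continuous_fst
    have hznz : ∀ q : {c : ℂ // c ≠ 0} × ℂ × ℂ, (q.1 : ℂ) ≠ 0 := fun q => q.1.2
    have h1 : Continuous fun q : {c : ℂ // c ≠ 0} × ℂ × ℂ => q.2.1 := by fun_prop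
    have h2 : Continuous fun q : {c : ℂ // c ≠ 0} × ℂ × ℂ => q.2.2 := by fun_prop
    have hw2 : Continuous fun q : {c : ℂ // c ≠ 0} × ℂ × ℂ =>
        (a₄ - 1 - q.2.1 * q.2.2) / (q.1 : ℂ) :=
      (Continuous.sub (by fun_prop) (h1.mul h2)).div hz hznz
    refine continuous_pi fun i => ?_
    fin_cases i <;> simp
    · exact hz
    · exact h1
    · exact (Continuous.sub continuous_const (h1.mul hw2)).div hz hznz
    · exact hw2
    · exact h2

/-- Chart over `{p 1 ≠ 0}`. -/
noncomputable def chart1 (a₃ a₄ : ℂ) :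
    {p : Fin 5 → ℂ //
      (p 0 * p 2 + p 1 * p 3 = a₃ ∧ 1 + p 0 * p 3 + p 1 * p 4 = a₄) ∧ p 1 ≠ 0}
      ≃ₜ ({c : ℂ // c ≠ 0} × ℂ × ℂ) where
  toFun p := (⟨p.1 1, p.2.2⟩, p.1 0, p.1 2)
  invFun q :=
    ⟨![q.2.1, (q.1 : ℂ), q.2.2, (a₃ - q.2.1 * q.2.2) / (q.1 : ℂ),
       (a₄ - 1 - q.2.1 * ((a₃ - q.2.1 * q.2.2) / (q.1 : ℂ))) / (q.1 : ℂ)],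
     by
       obtain ⟨⟨z, hz⟩, t, w⟩ := q
       refine ⟨⟨?_, ?_⟩, hz⟩ <;> simp <;> field_simp <;> ring⟩
  left_inv := by
    rintro ⟨p, ⟨h1, h2⟩, hz⟩
    apply Subtype.ext
    have h3 : (a₃ - p 0 * p 2) / p 1 = p 3 := by
      have h : a₃ - p 0 * p 2 = p 1 * p 3 := by linear_combination -h1
      rw [h]; exact mul_div_cancel_left₀ _ hz
    have h4 : (a₄ - 1 - p 0 * p 3) / p 1 = p 4 := by
      have h : a₄ - 1 - p 0 * p 3 = p 1 * p 4 := by linear_combination -h2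
      rw [h]; exact mul_div_cancel_left₀ _ hz
    funext i
    fin_cases i <;> simp [h3, h4]
  right_inv := by
    rintro ⟨⟨z, hz⟩, t, w⟩
    simp
  continuous_toFun := by
    have h : ∀ i : Fin 5, Continuous fun p : {p : Fin 5 → ℂ //
        (p 0 * p 2 + p 1 * p 3 = a₃ ∧ 1 + p 0 * p 3 + p 1 * p 4 = a₄) ∧ p 1 ≠ 0} =>
        (p : Fin 5 → ℂ) i := fun i => (continuous_apply i).comp continuous_subtype_val
    exact ((h 1).subtype_mk _).prodMk ((h 0).prodMk (h 2))
  continuous_invFun := by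
    apply Continuous.subtype_mk
    have hz : Continuous fun q : {c : ℂ // c ≠ 0} × ℂ × ℂ => (q.1 : ℂ) :=
      continuous_subtype_val.comp continuous_fst
    have hznz : ∀ q : {c : ℂ // c ≠ 0} × ℂ × ℂ, (q.1 : ℂ) ≠ 0 := fun q => q.1.2
    have h1 : Continuous fun q : {c : ℂ // c ≠ 0} × ℂ × ℂ => q.2.1 := by fun_prop
    have h2 : Continuous fun q : {c : ℂ // c ≠ 0} × ℂ × ℂ => q.2.2 := by fun_prop
    have hw2 : Continuous fun q : {c : ℂ // c ≠ 0} × ℂ × ℂ =>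
        (a₃ - q.2.1 * q.2.2) / (q.1 : ℂ) :=
      (Continuous.sub continuous_const (h1.mul h2)).div hz hznz
    refine continuous_pi fun i => ?_
    fin_cases i <;> simp
    · exact h1
    · exact hz
    · exact h2
    · exact hw2
    · exact (Continuous.sub (by fun_prop) (h1.mul hw2)).div hz hznz

end Aux

/-- The generic smooth fiber G over (a₃,a₄) ∉ {(0,0),(0,1)} is a smooth (rank-2 Jacobian)
connected variety covered by the two charts {z₂ ≠ 0} and {z₃ ≠ 0}, each homeomorphic to
ℂ* × ℂ × ℂ, with nonempty intersection. Coordinates p = (z₂,z₃,w₁,w₂,w₃). -/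
theorem generic_fiber_smooth_connected (a₃ a₄ : ℂ)
    (h0 : (a₃, a₄) ≠ (0, 0)) (h1 : (a₃, a₄) ≠ (0, 1))
    (G : Set (Fin 5 → ℂ))
    (hG : G = {p : Fin 5 → ℂ |
      p 0 * p 2 + p 1 * p 3 = a₃ ∧ 1 + p 0 * p 3 + p 1 * p 4 = a₄}) :
    (∀ p ∈ G, Matrix.rank
        (!![p 2, p 3, p 0, p 1, 0; p 3, p 4, 0, p 0, p 1] : Matrix (Fin 2) (Fin 5) ℂ) = 2) ∧
    IsConnected G ∧
    (∀ p ∈ G, p 0 ≠ 0 ∨ p 1 ≠ 0) ∧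
    Nonempty ({p : Fin 5 → ℂ // p ∈ G ∧ p 0 ≠ 0} ≃ₜ ({c : ℂ // c ≠ 0} × ℂ × ℂ)) ∧
    Nonempty ({p : Fin 5 → ℂ // p ∈ G ∧ p 1 ≠ 0} ≃ₜ ({c : ℂ // c ≠ 0} × ℂ × ℂ)) ∧
    (∃ p ∈ G, p 0 ≠ 0 ∧ p 1 ≠ 0) := by
  subst hG
  -- the covering property
  have hcov : ∀ p ∈ {p : Fin 5 → ℂ |
      p 0 * p 2 + p 1 * p 3 = a₃ ∧ 1 + p 0 * p 3 + p 1 * p 4 = a₄}, p 0 ≠ 0 ∨ p 1 ≠ 0 := by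
    intro p hp
    by_contra hc
    push_neg at hc
    obtain ⟨hz2, hz3⟩ := hc
    obtain ⟨e1, e2⟩ := hp
    rw [hz2, hz3] at e1 e2
    simp at e1 e2
    exact h1 (by rw [← e1, ← e2])
  -- base point in both charts
  have hbase : (![1, 1, a₃, 0, a₄ - 1] : Fin 5 → ℂ) ∈ {p : Fin 5 → ℂ |
      p 0 * p 2 + p 1 * p 3 = a₃ ∧ 1 + p 0 * p 3 + p 1 * p 4 = a₄} := by
    constructor <;> simp <;> ring
  have := aux_connectedSpace_ne_zero
  refine ⟨?_, ?_, hcov, ⟨chart0 a₃ a₄⟩, ⟨chart1 a₃ a₄⟩,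
    ![1, 1, a₃, 0, a₄ - 1], hbase, by norm_num, by norm_num⟩
  · -- rank
    intro p hp
    set M : Matrix (Fin 2) (Fin 5) ℂ := !![p 2, p 3, p 0, p 1, 0; p 3, p 4, 0, p 0, p 1]
    refine le_antisymm (by simpa using M.rank_le_card_height) ?_
    rcases hcov p hp with hz | hz
    · -- columns 2, 3
      have key : M * (Matrix.of fun (i : Fin 5) (j : Fin 2) =>
          if i = ![2, 3] j then (1 : ℂ) else 0) = !![p 0, p 1; 0, p 0] := by
        ext i j
        fin_cases i <;> fin_cases j <;>
          simp [M, Matrix.mul_apply, Fin.sum_univ_five]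
      have h2 : Matrix.rank (!![p 0, p 1; 0, p 0] : Matrix (Fin 2) (Fin 2) ℂ) = 2 := by
        rw [Matrix.rank_of_isUnit]
        · simp
        · rw [Matrix.isUnit_iff_isUnit_det]
          simp [Matrix.det_fin_two_of]
          exact fun h => absurd h hz
      calc (2 : ℕ) = Matrix.rank (!![p 0, p 1; 0, p 0] : Matrix (Fin 2) (Fin 2) ℂ) := h2.symm
        _ = Matrix.rank (M * (Matrix.of fun (i : Fin 5) (j : Fin 2) =>
            if i = ![2, 3] j then (1 : ℂ) else 0)) := by rw [key]
        _ ≤ M.rank := Matrix.rank_mul_le_left _ _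
    · -- columns 3, 4
      have key : M * (Matrix.of fun (i : Fin 5) (j : Fin 2) =>
          if i = ![3, 4] j then (1 : ℂ) else 0) = !![p 1, 0; p 0, p 1] := by
        ext i j
        fin_cases i <;> fin_cases j <;>
          simp [M, Matrix.mul_apply, Fin.sum_univ_five]
      have h2 : Matrix.rank (!![p 1, 0; p 0, p 1] : Matrix (Fin 2) (Fin 2) ℂ) = 2 := by
        rw [Matrix.rank_of_isUnit]
        · simp
        · rw [Matrix.isUnit_iff_isUnit_det]
          simp [Matrix.det_fin_two_of]
          exact fun h => absurd h hz
      calc (2 : ℕ) = Matrix.rank (!![p 1, 0; p 0, p 1] : Matrix (Fin 2) (Fin 2) ℂ) := h2.symm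
        _ = Matrix.rank (M * (Matrix.of fun (i : Fin 5) (j : Fin 2) =>
            if i = ![3, 4] j then (1 : ℂ) else 0)) := by rw [key]
        _ ≤ M.rank := Matrix.rank_mul_le_left _ _
  · -- connectedness
    have hS : IsConnected {p : Fin 5 → ℂ |
        (p 0 * p 2 + p 1 * p 3 = a₃ ∧ 1 + p 0 * p 3 + p 1 * p 4 = a₄) ∧ p 0 ≠ 0} := by
      have hf : Continuous fun q : {c : ℂ // c ≠ 0} × ℂ × ℂ =>
          ((chart0 a₃ a₄).symm q : Fin 5 → ℂ) :=
        continuous_subtype_val.comp (chart0 a₃ a₄).symm.continuous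
      have := isConnected_range hf
      convert this using 1
      have heq : (fun q => ((chart0 a₃ a₄).symm q : Fin 5 → ℂ)) =
          Subtype.val ∘ (chart0 a₃ a₄).symm := rfl
      rw [heq, Set.range_comp, (chart0 a₃ a₄).symm.surjective.range_eq, Set.image_univ,
        Subtype.range_coe_subtype]
    have hT : IsConnected {p : Fin 5 → ℂ |
        (p 0 * p 2 + p 1 * p 3 = a₃ ∧ 1 + p 0 * p 3 + p 1 * p 4 = a₄) ∧ p 1 ≠ 0} := by
      have hf : Continuous fun q : {c : ℂ // c ≠ 0} × ℂ × ℂ =>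
          ((chart1 a₃ a₄).symm q : Fin 5 → ℂ) :=
        continuous_subtype_val.comp (chart1 a₃ a₄).symm.continuous
      have := isConnected_range hf
      convert this using 1
      have heq : (fun q => ((chart1 a₃ a₄).symm q : Fin 5 → ℂ)) =
          Subtype.val ∘ (chart1 a₃ a₄).symm := rfl
      rw [heq, Set.range_comp, (chart1 a₃ a₄).symm.surjective.range_eq, Set.image_univ,
        Subtype.range_coe_subtype]
    have hunion : {p : Fin 5 → ℂ |
        p 0 * p 2 + p 1 * p 3 = a₃ ∧ 1 + p 0 * p 3 + p 1 * p 4 = a₄} =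
        {p : Fin 5 → ℂ |
          (p 0 * p 2 + p 1 * p 3 = a₃ ∧ 1 + p 0 * p 3 + p 1 * p 4 = a₄) ∧ p 0 ≠ 0} ∪
        {p : Fin 5 → ℂ |
          (p 0 * p 2 + p 1 * p 3 = a₃ ∧ 1 + p 0 * p 3 + p 1 * p 4 = a₄) ∧ p 1 ≠ 0} := by
      ext p
      constructor
      · intro hp
        rcases hcov p hp with h | h
        · exact Or.inl ⟨hp, h⟩
        · exact Or.inr ⟨hp, h⟩
      · rintro (⟨hp, _⟩ | ⟨hp, _⟩) <;> exact hp
    rw [hunion]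
    exact IsConnected.union ⟨![1, 1, a₃, 0, a₄ - 1], ⟨hbase, by norm_num⟩, ⟨hbase, by norm_num⟩⟩ hS hT
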